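/- For any two functions f, g : F_p^n → ℝ/ℤ, |⟨e(f), e(g)⟩|⁴ ≤ E_{h ∈ F_p^n} |⟨e(Δ_h f), e(Δ_h g)⟩|², where e(t) = exp(2πit), ⟨u,v⟩ = E_x u(x) conj(v(x)) is the averaged inner product, and Δ_h f(x) = f(x+h) - f(x). -/

import Mathlib

open scoped BigOperators

/-- Additive derivative of a map `P` in direction `h`. -/
def addDeriv {G M : Type*} [Add G] [Sub M] (h : G) (P : G → M) : G → M :=
  fun x => P (x + h) - P x

/-- The exponential `e(t) = exp(2πit)` on `ℝ/ℤ`. -/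
noncomputable def ee (t : AddCircle (1 : ℝ)) : ℂ := (AddCircle.toCircle t : ℂ)

/-- Averaged inner product of two complex-valued functions on `F_p^n`. -/
noncomputable def avgInner (p n : ℕ) [NeZero p] (u v : (Fin n → ZMod p) → ℂ) : ℂ :=
  (1 / (p : ℂ) ^ n) * ∑ x : Fin n → ZMod p, u x * (starRingEnd ℂ) (v x)

lemma ee_abs (t : AddCircle (1 : ℝ)) : ‖ee t‖ = 1 := by
  simp [ee, Circle.norm_coe]

lemma ee_mul_conj_self (t : AddCircle (1 : ℝ)) :
    ee t * (starRingEnd ℂ) (ee t) = 1 := by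
  rw [Complex.mul_conj]
  norm_cast
  simp [Complex.normSq_eq_norm_sq, ee_abs]

lemma ee_add (a b : AddCircle (1 : ℝ)) : ee (a + b) = ee a * ee b := by
  simp [ee, AddCircle.toCircle_add]

lemma ee_sub (a b : AddCircle (1 : ℝ)) :
    ee (a - b) = ee a * (starRingEnd ℂ) (ee b) := by
  have h1 : ee (a - b) * ee b = ee a := by
    rw [← ee_add, sub_add_cancel]
  calc ee (a - b) = ee (a - b) * (ee b * (starRingEnd ℂ) (ee b)) := by
        rw [ee_mul_conj_self, mul_one]
    _ = (ee (a - b) * ee b) * (starRingEnd ℂ) (ee b) := by ring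
    _ = ee a * (starRingEnd ℂ) (ee b) := by rw [h1]

theorem stmt_8 (p : ℕ) [NeZero p] (hp : p.Prime) (n : ℕ)
    (f g : (Fin n → ZMod p) → AddCircle (1 : ℝ)) :
    (‖avgInner p n (fun x => ee (f x)) (fun x => ee (g x))‖) ^ 4
      ≤ (1 / (p : ℝ) ^ n) * ∑ h : Fin n → ZMod p,
          (‖avgInner p n (fun x => ee (addDeriv h f x))
            (fun x => ee (addDeriv h g x))‖) ^ 2 := by
  classical
  set S : ℂ := ∑ x : Fin n → ZMod p, ee (f x) * (starRingEnd ℂ) (ee (g x)) with hS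
  set A : (Fin n → ZMod p) → ℂ := fun h => ∑ x : Fin n → ZMod p,
      ee (addDeriv h f x) * (starRingEnd ℂ) (ee (addDeriv h g x)) with hA
  have hppos : (0:ℝ) < (p : ℝ) ^ n := by
    have hp0 : (0:ℝ) < (p : ℝ) := by exact_mod_cast hp.pos
    positivity
  -- key identity : S * conj S = ∑ h, conj (A h)
  have key : S * (starRingEnd ℂ) S = ∑ h : Fin n → ZMod p, (starRingEnd ℂ) (A h) := by
    have expand : ∀ h : Fin n → ZMod p, (starRingEnd ℂ) (A h) =
        ∑ x : Fin n → ZMod p, (ee (f x) * (starRingEnd ℂ) (ee (g x))) *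
          ((starRingEnd ℂ) (ee (f (x + h))) * ee (g (x + h))) := by
      intro h
      rw [hA, map_sum]
      refine Finset.sum_congr rfl fun x _ => ?_
      simp only [addDeriv, ee_sub, map_mul, Complex.conj_conj]
      ring
    calc S * (starRingEnd ℂ) S
        = ∑ x : Fin n → ZMod p, ∑ y : Fin n → ZMod p,
            (ee (f x) * (starRingEnd ℂ) (ee (g x))) *
            ((starRingEnd ℂ) (ee (f y)) * ee (g y)) := by
          rw [hS, map_sum, Finset.sum_mul_sum]
          refine Finset.sum_congr rfl fun x _ => Finset.sum_congr rfl fun y _ => ?_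
          simp only [map_mul, Complex.conj_conj]
      _ = ∑ x : Fin n → ZMod p, ∑ h : Fin n → ZMod p,
            (ee (f x) * (starRingEnd ℂ) (ee (g x))) *
            ((starRingEnd ℂ) (ee (f (x + h))) * ee (g (x + h))) := by
          refine Finset.sum_congr rfl fun x _ => ?_
          exact (Fintype.sum_equiv (Equiv.addLeft x) _ _ fun h => rfl).symm
      _ = ∑ h : Fin n → ZMod p, ∑ x : Fin n → ZMod p,
            (ee (f x) * (starRingEnd ℂ) (ee (g x))) *
            ((starRingEnd ℂ) (ee (f (x + h))) * ee (g (x + h))) := Finset.sum_comm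
      _ = ∑ h : Fin n → ZMod p, (starRingEnd ℂ) (A h) := by
          refine Finset.sum_congr rfl fun h _ => (expand h).symm
  have hcard : (Fintype.card (Fin n → ZMod p) : ℝ) = (p : ℝ) ^ n := by
    simp [ZMod.card]
  have habs2 : (‖S‖) ^ 2
      = ‖∑ h : Fin n → ZMod p, (starRingEnd ℂ) (A h)‖ := by
    rw [← key, norm_mul, Complex.norm_conj, sq]
  have step1 : ‖∑ h : Fin n → ZMod p, (starRingEnd ℂ) (A h)‖
      ≤ ∑ h : Fin n → ZMod p, ‖A h‖ := by
    calc ‖∑ h : Fin n → ZMod p, (starRingEnd ℂ) (A h)‖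
        = ‖∑ h : Fin n → ZMod p, (starRingEnd ℂ) (A h)‖ := rfl
      _ ≤ ∑ h : Fin n → ZMod p, ‖(starRingEnd ℂ) (A h)‖ := norm_sum_le _ _
      _ = ∑ h : Fin n → ZMod p, ‖A h‖ := by
          refine Finset.sum_congr rfl fun h _ => ?_
          simp [Complex.norm_conj]
  have step2 : (∑ h : Fin n → ZMod p, ‖A h‖) ^ 2
      ≤ (Fintype.card (Fin n → ZMod p) : ℝ)
          * ∑ h : Fin n → ZMod p, (‖A h‖) ^ 2 := by
    simpa using sq_sum_le_card_mul_sum_sq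
      (s := (Finset.univ : Finset (Fin n → ZMod p)))
      (f := fun h => ‖A h‖)
  have main : (‖S‖) ^ 4
      ≤ (p : ℝ) ^ n * ∑ h : Fin n → ZMod p, (‖A h‖) ^ 2 := by
    have h4 : (‖S‖) ^ 4 = ((‖S‖) ^ 2) ^ 2 := by ring
    rw [h4, habs2, ← hcard]
    calc (‖∑ h : Fin n → ZMod p, (starRingEnd ℂ) (A h)‖) ^ 2
        ≤ (∑ h : Fin n → ZMod p, ‖A h‖) ^ 2 := by
          apply pow_le_pow_left₀ (norm_nonneg _) step1
      _ ≤ _ := step2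
  have havg : ‖avgInner p n (fun x => ee (f x)) (fun x => ee (g x))‖
      = ‖S‖ / (p : ℝ) ^ n := by
    rw [avgInner, norm_mul, ← hS]
    rw [norm_div, norm_one, norm_pow, Complex.norm_natCast]
    ring
  have havgA : ∀ h : Fin n → ZMod p,
      ‖avgInner p n (fun x => ee (addDeriv h f x))
        (fun x => ee (addDeriv h g x))‖ = ‖A h‖ / (p : ℝ) ^ n := by
    intro h
    rw [avgInner, norm_mul]
    rw [norm_div, norm_one, norm_pow, Complex.norm_natCast]
    rw [hA]
    ring
  rw [havg]
  have hrhs : (1 / (p : ℝ) ^ n) * ∑ h : Fin n → ZMod p,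
      (‖avgInner p n (fun x => ee (addDeriv h f x))
        (fun x => ee (addDeriv h g x))‖) ^ 2
      = (1 / ((p : ℝ) ^ n) ^ 3)
          * ∑ h : Fin n → ZMod p, (‖A h‖) ^ 2 := by
    rw [Finset.mul_sum, Finset.mul_sum]
    refine Finset.sum_congr rfl fun h _ => ?_
    rw [havgA h]
    ring
  rw [hrhs, div_pow, div_le_iff₀ (by positivity)]
  calc (‖S‖) ^ 4
      ≤ (p : ℝ) ^ n * ∑ h : Fin n → ZMod p, (‖A h‖) ^ 2 := main
    _ = (1 / ((p : ℝ) ^ n) ^ 3) * (∑ h : Fin n → ZMod p, (‖A h‖) ^ 2)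
          * ((p : ℝ) ^ n) ^ 4 := by
        field_simp
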